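/- arXiv:2003.08878 — 2 statements merged into one kernel-verified Lean document; each statement's English description precedes it below -/
import Mathlib

section
/- Let R be a commutative ring, I an ideal, and x ∈ R. For all n ≥ 1, the intersection ⋂_{α=1}^{n} ( (x^α) + (I^{n+1-α} : x^∞) ) equals the sum Σ_{α=0}^{n} x^α·(I^{n-α} : x^∞). -/
set_option maxHeartbeats 800000

/-- The saturation `I : x^∞ = ⋃ k, (I : x^k)`. -/
noncomputable def satur {R : Type*} [CommRing R] (I : Ideal R) (x : R) : Ideal R :=
  ⨆ k : ℕ, Submodule.colon I (Ideal.span {x ^ k})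

section aux
variable {R : Type*} [CommRing R]

lemma mem_satur {I : Ideal R} {x y : R} : y ∈ satur I x ↔ ∃ k, y * x ^ k ∈ I := by
  unfold satur
  rw [Submodule.mem_iSup_of_directed]
  · simp [Ideal.mem_colon_span_singleton]
  · apply Monotone.directed_le
    intro a b hab
    apply Submodule.colon_mono le_rfl
    rw [SetLike.coe_subset_coe, Ideal.span_singleton_le_span_singleton]
    exact pow_dvd_pow x hab

lemma satur_mono {I J : Ideal R} (h : I ≤ J) (x : R) : satur I x ≤ satur J x := by
  intro y hy
  rw [mem_satur] at hy ⊢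
  obtain ⟨k, hk⟩ := hy
  exact ⟨k, h hk⟩

lemma le_satur (I : Ideal R) (x : R) : I ≤ satur I x := fun y hy =>
  mem_satur.2 ⟨0, by simpa using hy⟩

lemma satur_top (x : R) : satur (⊤ : Ideal R) x = ⊤ :=
  top_le_iff.1 (le_satur ⊤ x)

lemma satur_absorb {I : Ideal R} {x z : R} {m : ℕ} (h : z * x ^ m ∈ satur I x) :
    z ∈ satur I x := by
  rw [mem_satur] at h ⊢
  obtain ⟨k, hk⟩ := h
  exact ⟨m + k, by rwa [pow_add, ← mul_assoc]⟩

lemma sum_ideal_le {ι : Type*} [DecidableEq ι] (s : Finset ι) (f : ι → Ideal R) (J : Ideal R)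
    (h : ∀ i ∈ s, f i ≤ J) : ∑ i ∈ s, f i ≤ J := by
  induction s using Finset.induction with
  | empty => simp
  | insert a s hi ih =>
    rw [Finset.sum_insert hi, Submodule.add_eq_sup, sup_le_iff]
    exact ⟨h _ (Finset.mem_insert_self _ _), ih fun i his => h i (Finset.mem_insert_of_mem his)⟩

end aux

theorem stmt2 {R : Type*} [CommRing R] (I : Ideal R) (x : R) (n : ℕ) (hn : 1 ≤ n) :
    (⨅ α ∈ Finset.Icc 1 n, (Ideal.span {x ^ α} + satur (I ^ (n + 1 - α)) x))
      = ∑ α ∈ Finset.range (n + 1), Ideal.span {x ^ α} * satur (I ^ (n - α)) x := by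
  apply le_antisymm
  · -- hard direction
    intro y hy
    simp only [Ideal.mem_iInf, Finset.mem_Icc] at hy
    -- claim: for all α ≤ n, y ∈ partial sum + span {x^α}
    have claim : ∀ α ≤ n,
        y ∈ (∑ β ∈ Finset.range α, Ideal.span {x ^ β} * satur (I ^ (n - β)) x)
          + Ideal.span {x ^ α} := by
      intro α hα
      induction α with
      | zero => simp [Ideal.mem_span_singleton]
      | succ α ih =>
        have hαn : α ≤ n := le_of_lt (Nat.lt_of_succ_le hα)
        have hy' := ih hαn
        rw [Submodule.add_eq_sup, Submodule.mem_sup] at hy'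
        obtain ⟨p, hp, q, hq, hpq⟩ := hy'
        rw [Ideal.mem_span_singleton'] at hq
        obtain ⟨z, hz⟩ := hq
        -- the partial sum lies in satur (I^(n-α)) x
        have hsum_le : (∑ β ∈ Finset.range α, Ideal.span {x ^ β} * satur (I ^ (n - β)) x)
            ≤ satur (I ^ (n - α)) x := by
          apply sum_ideal_le
          intro β hβ
          rw [Finset.mem_range] at hβ
          refine le_trans Ideal.mul_le_right (satur_mono (Ideal.pow_le_pow_right ?_) x)
          omega
        -- from hy at index α+1
        have h1 : y ∈ Ideal.span {x ^ (α + 1)} + satur (I ^ (n - α)) x := by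
          have := hy (α + 1) ⟨Nat.succ_le_succ (Nat.zero_le α), hα⟩
          have he : n + 1 - (α + 1) = n - α := by omega
          rwa [he] at this
        have h2 : z * x ^ α ∈ Ideal.span {x ^ (α + 1)} + satur (I ^ (n - α)) x := by
          have : z * x ^ α = y - p := by linear_combination hz + hpq
          rw [this]
          exact Submodule.sub_mem _ h1
            (Submodule.mem_sup_right (hsum_le hp))
        rw [Submodule.add_eq_sup, Submodule.mem_sup] at h2
        obtain ⟨a, ha, t, ht, hat⟩ := h2
        rw [Ideal.mem_span_singleton'] at ha
        obtain ⟨w, hw⟩ := ha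
        -- t = (z - w * x) * x ^ α
        have ht' : (z - w * x) * x ^ α ∈ satur (I ^ (n - α)) x := by
          have : (z - w * x) * x ^ α = t := by linear_combination -hat - hw
          rwa [this]
        have hzwx : z - w * x ∈ satur (I ^ (n - α)) x := satur_absorb ht'
        -- assemble
        rw [Finset.sum_range_succ, Submodule.add_eq_sup, Submodule.add_eq_sup,
          Submodule.mem_sup]
        refine ⟨p + (z - w * x) * x ^ α, ?_, w * x ^ (α + 1), ?_, by linear_combination hpq + hz⟩
        · rw [Submodule.mem_sup]
          have hm := Ideal.mul_mem_mul (Ideal.mem_span_singleton_self (x ^ α)) hzwx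
          rw [mul_comm (x ^ α)] at hm
          exact ⟨p, hp, (z - w * x) * x ^ α, hm, rfl⟩
        · exact Ideal.mem_span_singleton'.2 ⟨w, rfl⟩
    have := claim n le_rfl
    rw [Finset.sum_range_succ]
    have hlast : Ideal.span {x ^ n} * satur (I ^ (n - n)) x = Ideal.span {x ^ n} := by
      rw [Nat.sub_self, pow_zero, Ideal.one_eq_top, satur_top, Ideal.mul_top]
    rw [hlast]
    exact this
  · -- easy direction
    simp only [le_iInf_iff]
    intro α hα
    rw [Finset.mem_Icc] at hα
    apply sum_ideal_le
    intro β hβ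
    rw [Finset.mem_range] at hβ
    rcases le_or_gt α β with h | h
    · refine le_trans ?_ le_sup_left
      refine le_trans Ideal.mul_le_left ?_
      rw [Ideal.span_singleton_le_span_singleton]
      exact pow_dvd_pow x h
    · refine le_trans ?_ le_sup_right
      refine le_trans Ideal.mul_le_right (satur_mono (Ideal.pow_le_pow_right ?_) x)
      omega
end

section
/- Let (R,m) be a Noetherian local ring of dimension d, x_1,…,x_d a system of parameters, and 1 ≤ s ≤ d−1. Then b(R)^{2^{s-1}} ⊆ b(R/Q_s^n) for all n ≥ 1, where Q_s = (x_1,…,x_s) and b(−) denotes the Schenzel ideal. -/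
/-- `x` is a system of parameters of the local ring `R`. -/
def IsSOP (R : Type*) [CommRing R] [IsLocalRing R] {d : ℕ} (x : Fin d → R) : Prop :=
  (∀ i, x i ∈ IsLocalRing.maximalIdeal R) ∧
    (Ideal.span (Set.range x)).radical = IsLocalRing.maximalIdeal R

/-- `Q_s = (x_1, …, x_s)`. -/
def Qup {R : Type*} [CommRing R] {d : ℕ} (x : Fin d → R) (s : ℕ) : Ideal R :=
  Ideal.span (x '' {i | (i : ℕ) < s})

/-- The Schenzel ideal `b(R)`. -/
noncomputable def bIdeal (R : Type*) [CommRing R] [IsLocalRing R] (d : ℕ) : Ideal R :=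
  ⨅ (x : Fin d → R) (_ : IsSOP R x) (s : Fin d),
    Submodule.colon (Qup x (s : ℕ))
      (Submodule.colon (Qup x (s : ℕ)) (Ideal.span {x s}))

section Aux

variable {R : Type*} [CommRing R] [IsLocalRing R] {d : ℕ}

lemma IsSOP.comp_equiv {z : Fin d → R} (hz : IsSOP R z) (σ : Equiv.Perm (Fin d)) :
    IsSOP R (z ∘ σ) := by
  refine ⟨fun i => hz.1 (σ i), ?_⟩
  rw [Set.range_comp, Equiv.range_eq_univ, Set.image_univ]
  exact hz.2

lemma IsSOP.pow {z : Fin d → R} (hz : IsSOP R z) (e : Fin d → ℕ) (he : ∀ i, 1 ≤ e i) :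
    IsSOP R (fun i => z i ^ e i) := by
  refine ⟨fun i => Ideal.pow_mem_of_mem _ (hz.1 i) _ (he i), ?_⟩
  apply le_antisymm
  · have h1 : Ideal.span (Set.range fun i => z i ^ e i) ≤ Ideal.span (Set.range z) := by
      rw [Ideal.span_le]
      rintro _ ⟨i, rfl⟩
      exact Ideal.pow_mem_of_mem _ (Ideal.subset_span (Set.mem_range_self i)) _ (he i)
    exact (Ideal.radical_mono h1).trans (le_of_eq hz.2)
  · have h2 : Ideal.span (Set.range z) ≤
        (Ideal.span (Set.range fun i => z i ^ e i)).radical := by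
      rw [Ideal.span_le]
      rintro _ ⟨i, rfl⟩
      exact ⟨e i, Ideal.subset_span ⟨i, rfl⟩⟩
    calc IsLocalRing.maximalIdeal R = (Ideal.span (Set.range z)).radical := hz.2.symm
      _ ≤ ((Ideal.span (Set.range fun i => z i ^ e i)).radical).radical :=
          Ideal.radical_mono h2
      _ = (Ideal.span (Set.range fun i => z i ^ e i)).radical := Ideal.radical_idem _

lemma bIdeal_le_colon (z : Fin d → R) (hz : IsSOP R z) (p : Fin d) :
    bIdeal R d ≤ Submodule.colon (Qup z (p : ℕ))
      (Submodule.colon (Qup z (p : ℕ)) (Ideal.span {z p})) :=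
  iInf_le_of_le z (iInf_le_of_le hz (iInf_le _ p))

lemma colon_colon_mul_le {b P X : Ideal R}
    (h : b ≤ Submodule.colon P (Submodule.colon P X)) :
    b * Submodule.colon P X ≤ P := by
  rw [Ideal.mul_le]
  intro r hr s hs
  simpa using Submodule.mem_colon.mp (h hr) s hs

lemma colon_mono_left {P K X : Ideal R} (h : P ≤ K) :
    Submodule.colon P X ≤ Submodule.colon K X := fun r hr =>
  Submodule.mem_colon.mpr fun p hp => h (Submodule.mem_colon.mp hr p hp)

/-- key instantiation of the Schenzel ideal bound: for any finite set `U` of indices,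
powered generators, and an index `j ∉ U`. -/
lemma keyB (z : Fin d → R) (hz : IsSOP R z) (e : Fin d → ℕ) (he : ∀ i, 1 ≤ e i)
    (U : Finset (Fin d)) (j : Fin d) (hj : j ∉ U) :
    bIdeal R d ≤
      Submodule.colon (Ideal.span ((fun i => z i ^ e i) '' ↑U))
        (Submodule.colon (Ideal.span ((fun i => z i ^ e i) '' ↑U))
          (Ideal.span {z j ^ e j})) := by
  classical
  set c := U.card with hc
  have hcd : c < d := by
    have hss : U ⊂ Finset.univ :=
      Finset.ssubset_univ_iff.mpr (fun h => hj (h ▸ Finset.mem_univ j))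
    have := Finset.card_lt_card hss
    simpa [hc, Fintype.card_fin] using this
  have hcompl : Uᶜ.card = d - c := by
    simp [Finset.card_compl, Fintype.card_fin, hc]
  have hjc : j ∈ Uᶜ := Finset.mem_compl.mpr hj
  let oU : Fin c ≃o {x // x ∈ U} := U.orderIsoOfFin rfl
  let oC : Fin (d - c) ≃o {x // x ∈ Uᶜ} := Uᶜ.orderIsoOfFin hcompl
  let z0 : Fin (d - c) := ⟨0, by omega⟩
  let k0 : Fin (d - c) := oC.symm ⟨j, hjc⟩
  let eC : Fin (d - c) ≃ {x // x ∈ Uᶜ} := (Equiv.swap z0 k0).trans oC.toEquiv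
  let eS : {x : Fin d // x ∈ Uᶜ} ≃ {x : Fin d // ¬ x ∈ U} :=
    Equiv.subtypeEquivRight (fun x => by simp)
  let σ : Equiv.Perm (Fin d) :=
    (finCongr (show d = c + (d - c) by omega)).trans
      (finSumFinEquiv.symm.trans
        ((Equiv.sumCongr oU.toEquiv (eC.trans eS)).trans (Equiv.sumCompl (· ∈ U))))
  have hσlt : ∀ (a : ℕ) (ha : a < c), σ ⟨a, lt_trans ha hcd⟩ = ↑(oU ⟨a, ha⟩) := by
    intro a ha
    have h1 : (finCongr (show d = c + (d - c) by omega) ⟨a, lt_trans ha hcd⟩)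
        = Fin.castAdd (d - c) ⟨a, ha⟩ := by
      ext; simp
    show (Equiv.sumCompl (· ∈ U)) ((Equiv.sumCongr oU.toEquiv (eC.trans eS))
      (finSumFinEquiv.symm (finCongr (show d = c + (d - c) by omega) ⟨a, lt_trans ha hcd⟩))) = _
    rw [h1, finSumFinEquiv_symm_apply_castAdd]
    simp
  have hσc : σ ⟨c, hcd⟩ = j := by
    have h1 : (finCongr (show d = c + (d - c) by omega) ⟨c, hcd⟩) = Fin.natAdd c z0 := by
      ext; simp [z0]
    show (Equiv.sumCompl (· ∈ U)) ((Equiv.sumCongr oU.toEquiv (eC.trans eS))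
      (finSumFinEquiv.symm (finCongr (show d = c + (d - c) by omega) ⟨c, hcd⟩))) = _
    rw [h1, finSumFinEquiv_symm_apply_natAdd]
    simp [eC, k0, eS, Equiv.swap_apply_left]
  have hset : σ '' {i : Fin d | (i : ℕ) < c} = ↑U := by
    apply le_antisymm
    · rintro _ ⟨i, hi, rfl⟩
      rw [show σ i = ↑(oU ⟨(i : ℕ), hi⟩) from hσlt (i : ℕ) hi]
      exact (oU ⟨(i : ℕ), hi⟩).2
    · intro u hu
      set i : Fin c := oU.symm ⟨u, hu⟩
      refine ⟨⟨(i : ℕ), lt_trans i.isLt hcd⟩, i.isLt, ?_⟩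
      rw [hσlt (i : ℕ) i.isLt]
      simp [i]
  have hsop : IsSOP R ((fun i => z i ^ e i) ∘ σ) := (hz.pow e he).comp_equiv σ
  have key := bIdeal_le_colon ((fun i => z i ^ e i) ∘ σ) hsop ⟨c, hcd⟩
  have hQ : Qup ((fun i => z i ^ e i) ∘ σ) ((⟨c, hcd⟩ : Fin d) : ℕ)
      = Ideal.span ((fun i => z i ^ e i) '' ↑U) := by
    show Ideal.span (((fun i => z i ^ e i) ∘ σ) '' {i : Fin d | (i : ℕ) < c}) = _
    rw [Set.image_comp, hset]
  have helt : ((fun i => z i ^ e i) ∘ σ) ⟨c, hcd⟩ = z j ^ e j := by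
    rw [Function.comp_apply, hσc]
  rw [hQ, helt] at key
  exact key

lemma pow_sup_le_pow_sup_pow {I J : Ideal R} {n i : ℕ} (h1 : 1 ≤ i) (h2 : i ≤ n) :
    (I ⊔ J) ^ n ≤ I ^ (n + 1 - i) ⊔ J ^ i := by
  rw [← Ideal.add_eq_sup, ← Ideal.add_eq_sup, add_pow, Ideal.sum_eq_sup]
  apply Finset.sup_le
  intro k hk
  by_cases hc : n + 1 - i ≤ k
  · exact Ideal.mul_le_left.trans (Ideal.mul_le_left.trans
      ((Ideal.pow_le_pow_right hc).trans le_sup_left))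
  · refine Ideal.mul_le_left.trans (Ideal.mul_le_right.trans
      ((Ideal.pow_le_pow_right ?_).trans le_sup_right))
    simp only [Finset.mem_range] at hk
    omega


lemma keyG (z : Fin d → R) (hz : IsSOP R z) :
    ∀ m : ℕ, 1 ≤ m → ∀ n : ℕ, 1 ≤ n → ∀ e : Fin d → ℕ, (∀ i, 1 ≤ e i) →
      ∀ F : Finset (Fin d), (∀ i ∈ F, m ≤ (i : ℕ)) →
      ∀ j : Fin d, m ≤ (j : ℕ) → j ∉ F →
      bIdeal R d ^ 2 ^ (m - 1) *
          Submodule.colon ((Qup z m) ^ n ⊔ Ideal.span ((fun i => z i ^ e i) '' ↑F))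
            (Ideal.span {z j ^ e j}) ≤
        (Qup z m) ^ n ⊔ Ideal.span ((fun i => z i ^ e i) '' ↑F) := by
  classical
  intro m hm
  induction m, hm using Nat.le_induction with
  | base =>
    intro n hn e he F hF j hj hjF
    have hd0 : 0 < d := j.pos
    set i0 : Fin d := ⟨0, hd0⟩ with hi0
    have hQ1 : Qup z 1 = Ideal.span {z i0} := by
      unfold Qup
      congr 1
      rw [show {i : Fin d | (i : ℕ) < 1} = {i0} from Set.ext fun i => by
        simp [Fin.ext_iff, hi0, Nat.lt_one_iff], Set.image_singleton]
    set e' : Fin d → ℕ := Function.update e i0 n with he'def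
    have hji0 : j ≠ i0 := by
      intro h
      rw [h] at hj
      simp [hi0] at hj
    have hiF : ∀ i ∈ F, i ≠ i0 := by
      intro i hi h
      have := hF i hi
      rw [h] at this
      simp [hi0] at this
    have he'' : ∀ i, 1 ≤ e' i := by
      intro i
      by_cases h : i = i0
      · simp [he'def, h, hn]
      · simp [he'def, Function.update_of_ne h, he i]
    have htail : (fun i => z i ^ e' i) '' ↑F = (fun i => z i ^ e i) '' ↑F :=
      Set.image_congr fun i hi => by rw [he'def, Function.update_of_ne (hiF i hi)]
    have hhead : z i0 ^ e' i0 = z i0 ^ n := by rw [he'def, Function.update_self]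
    have himg : (fun i => z i ^ e' i) '' ↑(insert i0 F) =
        insert (z i0 ^ n) ((fun i => z i ^ e i) '' ↑F) := by
      rw [Finset.coe_insert, Set.image_insert_eq, htail, hhead]
    have hspan : Ideal.span ((fun i => z i ^ e' i) '' ↑(insert i0 F)) =
        (Qup z 1) ^ n ⊔ Ideal.span ((fun i => z i ^ e i) '' ↑F) := by
      rw [himg, Ideal.span_insert, hQ1, Ideal.span_singleton_pow]
    have hkey := keyB z hz e' he'' (insert i0 F) j
      (by simp [Finset.mem_insert, hji0, hjF])
    rw [hspan] at hkey
    rw [show z j ^ e' j = z j ^ e j from by rw [he'def, Function.update_of_ne hji0]] at hkey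
    simpa using colon_colon_mul_le hkey
  | succ m hm ih =>
    intro n hn e he F hF j hj hjF
    have hmd : m < d := lt_of_le_of_lt (by omega : m ≤ (j : ℕ)) j.isLt
    set jm : Fin d := ⟨m, hmd⟩ with hjm
    set g : R := z jm with hg
    set Bm := Qup z m with hBm
    set ZF := Ideal.span ((fun i => z i ^ e i) '' ↑F) with hZF
    have hjne : j ≠ jm := by
      intro h
      have : (j : ℕ) = m := by rw [h]
      omega
    have hFne : ∀ i ∈ F, i ≠ jm := by
      intro i hi h
      have h2 := hF i hi
      have : (i : ℕ) = m := by rw [h]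
      omega
    have hgmem : g ∈ Qup z (m + 1) :=
      Ideal.subset_span ⟨jm, by simp [hjm], rfl⟩
    have hBmle : Bm ≤ Qup z (m + 1) := by
      rw [hBm]
      unfold Qup
      exact Ideal.span_mono (Set.image_mono fun i hi => by
        simp only [Set.mem_setOf_eq] at hi ⊢; omega)
    have hBsplit : Qup z (m + 1) = Bm ⊔ Ideal.span {g} := by
      apply le_antisymm
      · unfold Qup
        rw [Ideal.span_le]
        rintro _ ⟨i, hi, rfl⟩
        simp only [Set.mem_setOf_eq] at hi
        by_cases h : (i : ℕ) < m
        · exact Submodule.mem_sup_left (Ideal.subset_span ⟨i, h, rfl⟩)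
        · have : i = jm := by
            rw [Fin.ext_iff]
            simp [hjm]; omega
          rw [this]
          exact Submodule.mem_sup_right (Ideal.subset_span rfl)
      · exact sup_le hBmle ((Ideal.span_le).mpr (by
          rintro _ rfl
          exact hgmem))
    -- decompose the power of b
    have hexp : bIdeal R d ^ 2 ^ (m + 1 - 1)
        = bIdeal R d ^ 2 ^ (m - 1) * bIdeal R d ^ 2 ^ (m - 1) := by
      rw [← pow_add]
      congr 1
      rw [show m + 1 - 1 = (m - 1) + 1 from by omega, Nat.two_pow_succ]
    rw [hexp, mul_assoc, Ideal.mul_le]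
    intro β' hβ' v hv
    -- Step 1: v lies in all the intermediate ideals
    have hKi : ∀ i : ℕ, 1 ≤ i → i ≤ n →
        v ∈ Bm ^ (n + 1 - i) ⊔ (Ideal.span {g ^ i} ⊔ ZF) := by
      intro i h1 h2
      set e' : Fin d → ℕ := Function.update e jm i with he'def
      have he'' : ∀ i', 1 ≤ e' i' := by
        intro i'
        by_cases h : i' = jm
        · simp [he'def, h, h1]
        · simp [he'def, Function.update_of_ne h, he i']
      have hF' : ∀ i' ∈ insert jm F, m ≤ (i' : ℕ) := by
        intro i' hi'
        rcases Finset.mem_insert.mp hi' with h | h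
        · simp [h, hjm]
        · exact le_trans (by omega) (hF i' h)
      have htail : (fun i' => z i' ^ e' i') '' ↑F = (fun i' => z i' ^ e i') '' ↑F :=
        Set.image_congr fun i' hi' => by
          rw [he'def, Function.update_of_ne (hFne i' hi')]
      have hhead : z jm ^ e' jm = g ^ i := by rw [he'def, Function.update_self, hg]
      have himg : Ideal.span ((fun i' => z i' ^ e' i') '' ↑(insert jm F))
          = Ideal.span {g ^ i} ⊔ ZF := by
        rw [Finset.coe_insert, Set.image_insert_eq, htail, hhead, Ideal.span_insert, hZF]
      have happ := ih (n + 1 - i) (by omega) e' he'' (insert jm F) hF' j (by omega)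
        (by simp [Finset.mem_insert, hjne, hjF])
      rw [himg] at happ
      rw [show z j ^ e' j = z j ^ e j from by
        rw [he'def, Function.update_of_ne hjne]] at happ
      refine happ ?_
      refine Ideal.mul_mono_right (colon_mono_left ?_) hv
      rw [hBsplit]
      refine sup_le ((pow_sup_le_pow_sup_pow h1 h2).trans ?_)
        (le_sup_right.trans le_sup_right)
      exact sup_le_sup le_rfl
        ((le_of_eq (Ideal.span_singleton_pow g i)).trans le_sup_left)
    -- Step 2: choose decompositions of v
    have hdec : ∀ i : ℕ, ∃ a r ζ : R, 1 ≤ i → i ≤ n →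
        a ∈ Bm ^ (n + 1 - i) ∧ ζ ∈ ZF ∧ v = a + r * g ^ i + ζ := by
      intro i
      by_cases h : 1 ≤ i ∧ i ≤ n
      · obtain ⟨a, ha, w, hw, hav⟩ := Submodule.mem_sup.mp (hKi i h.1 h.2)
        obtain ⟨dd, hdd, ζ, hζ, hwd⟩ := Submodule.mem_sup.mp hw
        obtain ⟨r, hr⟩ := Ideal.mem_span_singleton'.mp hdd
        exact ⟨a, r, ζ, fun _ _ => ⟨ha, hζ, by rw [← hav, ← hwd, hr]; ring⟩⟩
      · exact ⟨0, 0, 0, fun h1 h2 => absurd ⟨h1, h2⟩ h⟩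
    choose av rv zv hprop using hdec
    -- Step 3: telescoping differences
    have htel : ∀ i : ℕ, 1 ≤ i → i + 1 ≤ n →
        β' * (rv i - g * rv (i + 1)) ∈ Bm ^ (n - i) ⊔ ZF := by
      intro i h1 h2
      obtain ⟨ha1, hz1, hv1⟩ := hprop i h1 (by omega)
      obtain ⟨ha2, hz2, hv2⟩ := hprop (i + 1) (by omega) h2
      have hmem : (rv i - g * rv (i + 1)) * g ^ i ∈ Bm ^ (n - i) ⊔ ZF := by
        have heq : (rv i - g * rv (i + 1)) * g ^ i
            = (av (i + 1) - av i) + (zv (i + 1) - zv i) := by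
          have h3 : av i + rv i * g ^ i + zv i = av (i + 1) + rv (i + 1) * g ^ (i + 1) + zv (i + 1) := by
            rw [← hv1, ← hv2]
          linear_combination h3
        rw [heq]
        refine Submodule.add_mem _ (Submodule.mem_sup_left (Submodule.sub_mem _ ?_ ?_))
          (Submodule.mem_sup_right (Submodule.sub_mem _ hz2 hz1))
        · rw [show n - i = n + 1 - (i + 1) from by omega]
          exact ha2
        · exact Ideal.pow_le_pow_right (by omega) ha1
      -- apply the inductive hypothesis for colon by g ^ i
      set e' : Fin d → ℕ := Function.update e jm i with he'def
      have he'' : ∀ i', 1 ≤ e' i' := by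
        intro i'
        by_cases h : i' = jm
        · simp [he'def, h, h1]
        · simp [he'def, Function.update_of_ne h, he i']
      have htail : (fun i' => z i' ^ e' i') '' ↑F = (fun i' => z i' ^ e i') '' ↑F :=
        Set.image_congr fun i' hi' => by
          rw [he'def, Function.update_of_ne (hFne i' hi')]
      have hhead : z jm ^ e' jm = g ^ i := by rw [he'def, Function.update_self, hg]
      have hFw : ∀ i' ∈ F, m ≤ (i' : ℕ) := fun i' hi' => le_trans (by omega) (hF i' hi')
      have hjmF : jm ∉ F := fun h => (hFne jm h) rfl
      have happ := ih (n - i) (by omega) e' he'' F hFw jm (by simp [hjm]) hjmF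
      rw [show Ideal.span ((fun i' => z i' ^ e' i') '' ↑F) = ZF from by rw [htail, hZF]] at happ
      rw [hhead] at happ
      refine happ (Ideal.mul_mem_mul hβ' ?_)
      exact Ideal.mem_colon_span_singleton.mpr hmem
    -- Step 4: descending induction
    have hS : ∀ k : ℕ, k ≤ n - 1 → g ^ (n - k) * (β' * rv (n - k)) ∈
        Qup z (m + 1) ^ n ⊔ ZF := by
      intro k
      induction k with
      | zero =>
        intro _
        have hgn : g ^ n ∈ Qup z (m + 1) ^ n := Ideal.pow_mem_pow hgmem n
        rw [Nat.sub_zero]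
        exact Submodule.mem_sup_left (Ideal.mul_mem_right _ _ hgn)
      | succ k ihk =>
        intro hk1
        have hn2 : 1 ≤ n := hn
        set i : ℕ := n - (k + 1) with hidef
        have hi1 : 1 ≤ i := by omega
        have hi2 : i + 1 ≤ n := by omega
        have hik : i + 1 = n - k := by omega
        have e1 : g ^ i * (β' * rv i)
            = g ^ i * (β' * (rv i - g * rv (i + 1))) + g ^ (i + 1) * (β' * rv (i + 1)) := by
          ring
        rw [e1]
        refine Submodule.add_mem _ ?_ ?_
        · obtain ⟨a, ha, ζ, hζ, heq⟩ := Submodule.mem_sup.mp (htel i hi1 hi2)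
          rw [← heq, mul_add]
          refine Submodule.add_mem _ ?_ (Submodule.mem_sup_right (Ideal.mul_mem_left _ _ hζ))
          refine Submodule.mem_sup_left ?_
          have hga : g ^ i * a ∈ Qup z (m + 1) ^ i * Qup z (m + 1) ^ (n - i) :=
            Ideal.mul_mem_mul (Ideal.pow_mem_pow hgmem i)
              (Ideal.pow_right_mono hBmle (n - i) ha)
          rwa [← pow_add, show i + (n - i) = n from by omega] at hga
        · have := ihk (by omega)
          rwa [← hik] at this
    -- Step 5: final assembly
    obtain ⟨ha1, hz1, hv1⟩ := hprop 1 le_rfl hn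
    have hfin : β' * v = β' * av 1 + g ^ 1 * (β' * rv 1) + β' * zv 1 := by
      rw [hv1]; ring
    rw [hfin]
    refine Submodule.add_mem _ (Submodule.add_mem _ ?_ ?_) ?_
    · refine Submodule.mem_sup_left (Ideal.mul_mem_left _ _ ?_)
      have : av 1 ∈ Bm ^ n := by
        have := ha1
        rwa [show n + 1 - 1 = n from by omega] at this
      exact Ideal.pow_right_mono hBmle n this
    · have := hS (n - 1) le_rfl
      rwa [show n - (n - 1) = 1 from by omega] at this
    · exact Submodule.mem_sup_right (Ideal.mul_mem_left _ _ hz1)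

end Aux

theorem stmt15 {R : Type*} [CommRing R] [IsLocalRing R] [IsNoetherianRing R] {d : ℕ}
    (hd : ringKrullDim R = d) (x : Fin d → R) (hx : IsSOP R x)
    (s : ℕ) (hs : 1 ≤ s) (hsd : s ≤ d - 1) (n : ℕ) (hn : 1 ≤ n)
    [IsLocalRing (R ⧸ Qup x s ^ n)] :
    bIdeal R d ^ 2 ^ (s - 1)
      ≤ Ideal.comap (Ideal.Quotient.mk (Qup x s ^ n))
          (bIdeal (R ⧸ Qup x s ^ n) (d - s)) := by
  classical
  have hsd' : s < d := by omega
  set mk := Ideal.Quotient.mk (Qup x s ^ n) with hmkdef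
  have hmax : Ideal.comap mk (IsLocalRing.maximalIdeal (R ⧸ Qup x s ^ n))
      = IsLocalRing.maximalIdeal R :=
    IsLocalRing.eq_maximalIdeal
      (Ideal.comap_isMaximal_of_surjective _ Ideal.Quotient.mk_surjective)
  intro β hβ
  rw [Ideal.mem_comap]
  simp only [bIdeal, Submodule.mem_iInf]
  intro y' hy' t
  -- lift the system of parameters of the quotient
  choose yl hyl using fun i => Ideal.Quotient.mk_surjective (I := Qup x s ^ n) (y' i)
  have hylm : ∀ i, yl i ∈ IsLocalRing.maximalIdeal R := by
    intro i
    rw [← hmax, Ideal.mem_comap, hyl]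
    exact hy'.1 i
  -- the concatenated system of parameters
  set zc : Fin d → R := fun i =>
    dite ((i : ℕ) < s) (fun _ => x i) (fun h => yl ⟨(i : ℕ) - s, by
      have := i.isLt; omega⟩) with hzc
  have hzcx : ∀ i : Fin d, (i : ℕ) < s → zc i = x i := fun i h => dif_pos h
  have hzcy : ∀ t' : Fin (d - s), zc ⟨s + (t' : ℕ), by have := t'.isLt; omega⟩ = yl t' := by
    intro t'
    have h : ¬ ((s + (t' : ℕ)) < s) := by omega
    rw [hzc]
    simp only
    rw [dif_neg h]
    congr 1
    ext
    simp
  have hQQ : Qup zc s = Qup x s := by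
    unfold Qup
    congr 1
    exact Set.image_congr fun i hi => hzcx i hi
  have hzcm : ∀ i, zc i ∈ IsLocalRing.maximalIdeal R := by
    intro i
    by_cases h : (i : ℕ) < s
    · rw [hzcx i h]; exact hx.1 i
    · rw [hzc]; simp only; rw [dif_neg h]; exact hylm _
  have hQpowle : Qup x s ^ n ≤ Ideal.span (Set.range zc) := by
    refine le_trans (Ideal.pow_le_self (by omega)) ?_
    rw [← hQQ]
    unfold Qup
    rw [Ideal.span_le]
    rintro _ ⟨i, _, rfl⟩
    exact Ideal.subset_span (Set.mem_range_self i)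
  have hrange_y' : Ideal.span (Set.range y')
      = Ideal.map mk (Ideal.span (Set.range yl)) := by
    rw [Ideal.map_span]
    congr 1
    rw [← Set.range_comp]
    exact congrArg Set.range (funext fun i => (hyl i).symm)
  have hcomap_span : Ideal.comap mk (Ideal.span (Set.range y'))
      = Ideal.span (Set.range yl) ⊔ Qup x s ^ n := by
    rw [hrange_y', Ideal.comap_map_of_surjective _ Ideal.Quotient.mk_surjective]
    congr 1
    rw [← RingHom.ker_eq_comap_bot]
    exact Ideal.mk_ker
  have hzcsop : IsSOP R zc := by
    refine ⟨hzcm, le_antisymm ?_ ?_⟩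
    · have h1 : Ideal.span (Set.range zc) ≤ IsLocalRing.maximalIdeal R := by
        rw [Ideal.span_le]
        rintro _ ⟨i, rfl⟩
        exact hzcm i
      exact (Ideal.radical_mono h1).trans
        (le_of_eq (IsLocalRing.maximalIdeal.isMaximal R).isPrime.radical)
    · have h2 : Ideal.span (Set.range yl) ⊔ Qup x s ^ n ≤ Ideal.span (Set.range zc) := by
        refine sup_le ?_ hQpowle
        rw [Ideal.span_le]
        rintro _ ⟨t', rfl⟩
        rw [← hzcy t']
        exact Ideal.subset_span (Set.mem_range_self _)
      have h3 : IsLocalRing.maximalIdeal R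
          = Ideal.radical (Ideal.span (Set.range yl) ⊔ Qup x s ^ n) := by
        rw [← hmax, ← hy'.2, Ideal.comap_radical, hcomap_span]
      rw [h3]
      exact Ideal.radical_mono h2
  -- the tail index set
  set emb : Fin (d - s) → Fin d := fun t' => ⟨s + (t' : ℕ), by have := t'.isLt; omega⟩
    with hemb
  set F : Finset (Fin d) :=
    (Finset.univ.filter (fun t' : Fin (d - s) => (t' : ℕ) < (t : ℕ))).image emb with hFdef
  have hFs : ∀ i ∈ F, s ≤ (i : ℕ) := by
    intro i hi
    obtain ⟨t', _, rfl⟩ := Finset.mem_image.mp hi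
    simp [hemb]
  have hjs : s ≤ ((emb t : Fin d) : ℕ) := by simp [hemb]
  have hjF : emb t ∉ F := by
    intro h
    obtain ⟨t', ht', heq⟩ := Finset.mem_image.mp h
    have : (t' : ℕ) = (t : ℕ) := by
      have := congrArg (fun i : Fin d => (i : ℕ)) heq
      simp [hemb] at this
      omega
    simp only [Finset.mem_filter] at ht'
    omega
  have hFimg : (fun i => zc i ^ (1 : ℕ)) '' ↑F
      = yl '' {i : Fin (d - s) | (i : ℕ) < (t : ℕ)} := by
    simp only [pow_one]
    rw [hFdef, Finset.coe_image, ← Set.image_comp]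
    have hcoe : ↑(Finset.univ.filter (fun t' : Fin (d - s) => (t' : ℕ) < (t : ℕ)))
        = {i : Fin (d - s) | (i : ℕ) < (t : ℕ)} := by
      ext i
      simp
    rw [hcoe]
    exact Set.image_congr fun t' _ => hzcy t'
  have hJcomap : Ideal.comap mk (Qup y' (t : ℕ))
      = Ideal.span (yl '' {i : Fin (d - s) | (i : ℕ) < (t : ℕ)}) ⊔ Qup x s ^ n := by
    show Ideal.comap mk (Ideal.span (y' '' {i : Fin (d - s) | (i : ℕ) < (t : ℕ)})) = _
    have himg : y' '' {i : Fin (d - s) | (i : ℕ) < (t : ℕ)}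
        = mk '' (yl '' {i : Fin (d - s) | (i : ℕ) < (t : ℕ)}) := by
      rw [← Set.image_comp]
      exact Set.image_congr fun i _ => (hyl i).symm
    rw [himg, ← Ideal.map_span, Ideal.comap_map_of_surjective _ Ideal.Quotient.mk_surjective]
    congr 1
    rw [← RingHom.ker_eq_comap_bot]
    exact Ideal.mk_ker
  -- apply the key lemma
  have hG := keyG zc hzcsop s hs n hn (fun _ => 1) (fun _ => le_rfl) F hFs (emb t) hjs hjF
  have hColt : zc (emb t) ^ (1 : ℕ) = yl t := by
    rw [pow_one, hemb]
    exact hzcy t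
  rw [hFimg, hColt, hQQ] at hG
  -- finish
  refine Submodule.mem_colon.mpr ?_
  intro p hp
  obtain ⟨u, rfl⟩ := Ideal.Quotient.mk_surjective p
  have hu : u * yl t ∈ Ideal.span (yl '' {i : Fin (d - s) | (i : ℕ) < (t : ℕ)})
      ⊔ Qup x s ^ n := by
    have h1 : mk u * y' t ∈ Qup y' (t : ℕ) := Ideal.mem_colon_span_singleton.mp hp
    rw [← hyl t, ← map_mul] at h1
    have h2 : u * yl t ∈ Ideal.comap mk (Qup y' (t : ℕ)) := h1
    rwa [hJcomap] at h2
  have hβu : β * u ∈ Qup x s ^ n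
      ⊔ Ideal.span (yl '' {i : Fin (d - s) | (i : ℕ) < (t : ℕ)}) := by
    refine hG (Ideal.mul_mem_mul hβ ?_)
    rw [Ideal.mem_colon_span_singleton, sup_comm]
    exact hu
  show mk β • mk u ∈ Qup y' (t : ℕ)
  rw [smul_eq_mul, ← map_mul]
  have : β * u ∈ Ideal.comap mk (Qup y' (t : ℕ)) := by
    rw [hJcomap, sup_comm]
    exact hβu
  exact this
end
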